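/- Let N be a binary matroid and a ∈ E(N) such that N \ a ≅ M(K_{3,3}). Then no element of N/a lies simultaneously in a 2-element circuit of N/a and in an odd circuit of N/a. -/

import Mathlib

open scoped Classical

namespace PaperSplit

variable {α β : Type}

/-- `A` is a matrix representation (columns indexed by `α`, rows by `η`) of the
matroid `M` over `GF(2)`, with ground set `E`. -/
def RepresentsOn {η : Type} (A : α → η → ZMod 2) (E : Set α) (M : Matroid α) : Prop :=
  M.E = E ∧ ∀ I ⊆ E, (M.Indep I ↔ LinearIndependent (ZMod 2) (fun i : I => A i.1))

/-- The columns of the matrix `A_T`: one extra row (indexed by `none`) is appended,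
with entry `1` exactly in the columns of `T`. -/
noncomputable def splitCols {η : Type} (A : α → η → ZMod 2) (T : Set α) :
    α → Option η → ZMod 2 :=
  fun a o => Option.elim o (if a ∈ T then 1 else 0) (A a)

/-- `MT` is the splitting matroid of `M` with respect to `T`. -/
def IsSplitting (M : Matroid α) (T : Set α) (MT : Matroid α) : Prop :=
  ∃ (η : Type) (A : α → η → ZMod 2),
    RepresentsOn A M.E M ∧ RepresentsOn (splitCols A T) M.E MT

/-- `M` is a binary matroid. -/
def IsBinary (M : Matroid α) : Prop :=
  ∃ (η : Type) (A : α → η → ZMod 2), RepresentsOn A M.E M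

/-- Deletion of a set of elements. -/
def del (M : Matroid α) (D : Set α) : Matroid α := M.restrict (M.E \ D)

/-- Contraction of a set of elements. -/
def con (M : Matroid α) (C : Set α) : Matroid α := (del M.dual C).dual

/-- `N` is a minor of `M`. -/
def IsMinorOf (N M : Matroid α) : Prop := ∃ X Y, Disjoint X Y ∧ N = con (del M X) Y

/-- `C` is a circuit (minimal dependent set) of `M`. -/
def circuit (M : Matroid α) (C : Set α) : Prop :=
  C ⊆ M.E ∧ ¬ M.Indep C ∧ ∀ D ⊂ C, M.Indep D

/-- `C` is a cocircuit of `M`, i.e. a circuit of the dual. -/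
def cocircuit (M : Matroid α) (C : Set α) : Prop := circuit M.dual C

def isLoop (M : Matroid α) (e : α) : Prop := circuit M {e}

def isColoop (M : Matroid α) (e : α) : Prop := isLoop M.dual e

/-- Matroid isomorphism. -/
def MIso (M : Matroid α) (N : Matroid β) : Prop :=
  ∃ e : M.E ≃ N.E, ∀ I : Set M.E,
    M.Indep (Subtype.val '' I) ↔ N.Indep (Subtype.val '' (e '' I))

/-- A graphic matroid: one represented over `GF(2)` by a vertex–edge incidence
matrix (each column is zero or the sum of two distinct standard basis vectors). -/
def IsGraphic (M : Matroid α) : Prop :=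
  ∃ (V : Type) (A : α → V → ZMod 2), RepresentsOn A M.E M ∧
    ∀ a ∈ M.E, A a = 0 ∨ ∃ u v : V, u ≠ v ∧
      A a = fun w => (if w = u then (1 : ZMod 2) else 0) + (if w = v then 1 else 0)

def IsCographic (M : Matroid α) : Prop := IsGraphic M.dual

/-- A multigraph with vertex type `V` and edge type `E`. -/
structure Multigraph (V E : Type) where
  ends : E → Sym2 V

/-- The mod-2 vertex–edge incidence matrix of a multigraph. -/
noncomputable def Multigraph.inc {V E : Type} (G : Multigraph V E) : E → V → ZMod 2 :=
  fun e v => if G.ends e = Sym2.mk v v then 0 else if v ∈ G.ends e then 1 else 0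

/-- `M` is the cycle matroid of the multigraph `G`. -/
def IsCycleMatroidOf {V E : Type} (G : Multigraph V E) (M : Matroid E) : Prop :=
  RepresentsOn G.inc Set.univ M

def Multigraph.Adj {V E : Type} (G : Multigraph V E) (u v : V) : Prop :=
  ∃ e, G.ends e = Sym2.mk u v

def Multigraph.Connected {V E : Type} (G : Multigraph V E) : Prop :=
  Nonempty V ∧ ∀ u v : V, Relation.ReflTransGen G.Adj u v

noncomputable def Multigraph.degree {V E : Type} (G : Multigraph V E) (v : V) : ℕ :=
  Nat.card {e | v ∈ G.ends e ∧ ¬ (G.ends e).IsDiag} +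
    2 * Nat.card {e | G.ends e = Sym2.mk v v}

def Multigraph.Eulerian {V E : Type} (G : Multigraph V E) : Prop :=
  G.Connected ∧ ∀ v, Even (G.degree v)

/-- The Fano matroid `F₇`: represented over `GF(2)` by the seven distinct
nonzero vectors of `GF(2)³`. -/
def IsFano (M : Matroid (Fin 7)) : Prop :=
  ∃ A : Fin 7 → Fin 3 → ZMod 2, RepresentsOn A Set.univ M ∧
    Function.Injective A ∧ ∀ i, A i ≠ 0

/-- The complete graph `K₅` as a multigraph. -/
def K5 : Multigraph (Fin 5) {p : Sym2 (Fin 5) // ¬ p.IsDiag} := ⟨fun e => e.1⟩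

/-- The complete bipartite graph `K₃,₃` as a multigraph. -/
def K33 : Multigraph (Fin 3 ⊕ Fin 3) (Fin 3 × Fin 3) :=
  ⟨fun e => Sym2.mk (Sum.inl e.1) (Sum.inr e.2)⟩


section Aux

open Set

private lemma zmod2_ne_zero : ∀ {x : ZMod 2}, x ≠ 0 → x = 1 := by decide

private lemma not_indep_of_sum_zero {η : Type} {A : α → η → ZMod 2} {E : Set α} {M : Matroid α}
    (hrep : RepresentsOn A E M) {D : Set α} (hDE : D ⊆ E) (hfin : D.Finite)
    (hne : D.Nonempty) (hsum : ∑ x ∈ hfin.toFinset, A x = 0) : ¬ M.Indep D := by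
  intro hind
  rw [hrep.2 D hDE] at hind
  haveI := hfin.fintype
  rw [Fintype.linearIndependent_iff] at hind
  have key : ∑ x ∈ hfin.toFinset, A x = ∑ i : D, A i.1 :=
    Finset.sum_subtype hfin.toFinset (fun x => hfin.mem_toFinset) A
  have h0 : ∑ i : D, (fun _ : D => (1 : ZMod 2)) i • A i.1 = 0 := by
    simp only [one_smul]
    rw [← key]; exact hsum
  obtain ⟨i0, hi0⟩ := hne
  exact one_ne_zero (hind _ h0 ⟨i0, hi0⟩)

private lemma circuit_sum_zero {η : Type} {A : α → η → ZMod 2} {E : Set α} {M : Matroid α}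
    (hrep : RepresentsOn A E M) {C : Set α} (hC : circuit M C) (hfin : C.Finite) :
    C.Nonempty ∧ ∑ x ∈ hfin.toFinset, A x = 0 := by
  have hCE : C ⊆ E := hrep.1 ▸ hC.1
  have hne : C.Nonempty := by
    rcases C.eq_empty_or_nonempty with rfl | h
    · exact absurd M.empty_indep hC.2.1
    · exact h
  refine ⟨hne, ?_⟩
  have hdep := hC.2.1
  rw [hrep.2 C hCE] at hdep
  haveI := hfin.fintype
  rw [Fintype.not_linearIndependent_iff] at hdep
  obtain ⟨g, hg, i0, hi0⟩ := hdep
  set D : Set α := Subtype.val '' {i : C | g i = 1} with hDdef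
  have hDC : D ⊆ C := by rintro x ⟨i, _, rfl⟩; exact i.2
  have hDfin : D.Finite := hfin.subset hDC
  have hDne : D.Nonempty := ⟨i0.1, ⟨i0, zmod2_ne_zero hi0, rfl⟩⟩
  have hDsum : ∑ x ∈ hDfin.toFinset, A x = 0 := by
    have himg : hDfin.toFinset
        = Finset.image Subtype.val (Finset.univ.filter (fun i : C => g i = 1)) := by
      ext x
      simp [hDdef, Set.Finite.mem_toFinset]
    rw [himg, Finset.sum_image (fun x _ y _ h => Subtype.val_injective h)]
    refine Eq.trans ?_ hg
    rw [Finset.sum_filter]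
    refine Finset.sum_congr rfl fun i _ => ?_
    by_cases h1 : g i = 1
    · simp [h1]
    · have h0 : g i = 0 := by
        rcases (by decide : ∀ y : ZMod 2, y = 0 ∨ y = 1) (g i) with h | h
        · exact h
        · exact absurd h h1
      simp [h1, h0]
  have hDeq : D = C := by
    by_contra hne'
    exact not_indep_of_sum_zero hrep (hDC.trans hCE) hDfin hDne hDsum
      (hC.2.2 D (Set.ssubset_iff_subset_ne.mpr ⟨hDC, hne'⟩))
  have hFeq : hfin.toFinset = hDfin.toFinset := by
    ext x; simp [Set.Finite.mem_toFinset, hDeq]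
  rw [hFeq]; exact hDsum

private lemma exists_circuit_subset (M : Matroid α) {S : Set α} (hfin : S.Finite)
    (hSE : S ⊆ M.E) (hdep : ¬ M.Indep S) : ∃ C, C ⊆ S ∧ circuit M C := by
  have hP : ∃ n, ∃ D, D ⊆ S ∧ ¬ M.Indep D ∧ D.ncard = n := ⟨S.ncard, S, Set.Subset.rfl, hdep, rfl⟩
  obtain ⟨C, hCS, hCdep, hCcard⟩ := Nat.find_spec hP
  refine ⟨C, hCS, hCS.trans hSE, hCdep, ?_⟩
  intro D hDss
  by_contra hDdep
  have hlt : D.ncard < Nat.find hP := by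
    rw [← hCcard]
    exact Set.ncard_lt_ncard hDss (hfin.subset hCS)
  exact Nat.find_min hP hlt ⟨D, hDss.subset.trans hCS, hDdep, rfl⟩

private lemma circuit_image {M : Matroid α} {MK : Matroid β} (h : MIso M MK)
    {C : Set α} (hC : circuit M C) : ∃ J, circuit MK J ∧ J.ncard = C.ncard := by
  obtain ⟨e, he⟩ := h
  set I : Set M.E := Subtype.val ⁻¹' C with hIdef
  have hIC : Subtype.val '' I = C :=
    Set.image_preimage_eq_of_subset (by rw [Subtype.range_coe]; exact hC.1)
  refine ⟨Subtype.val '' (e '' I), ⟨?_, ?_, ?_⟩, ?_⟩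
  · exact Subtype.coe_image_subset _ _
  · intro hind
    have h1 := (he I).mpr hind
    rw [hIC] at h1
    exact hC.2.1 h1
  · intro D hDss
    set I' : Set MK.E := Subtype.val ⁻¹' D with hI'def
    have hDsub : D ⊆ MK.E := hDss.subset.trans (Subtype.coe_image_subset _ _)
    have hI'D : Subtype.val '' I' = D :=
      Set.image_preimage_eq_of_subset (by rw [Subtype.range_coe]; exact hDsub)
    have hI'sub : I' ⊆ e '' I := by
      intro i hi
      have hmem : (i : β) ∈ Subtype.val '' (e '' I) := hDss.subset hi
      obtain ⟨j, hj, hji⟩ := hmem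
      rwa [← Subtype.val_injective hji]
    have h1 : e.symm '' I' ⊆ I := by
      have h2 := Set.image_mono (f := e.symm) hI'sub
      rwa [Equiv.symm_image_image] at h2
    have hKsub : Subtype.val '' (e.symm '' I') ⊆ C := by
      rw [← hIC]; exact Set.image_mono h1
    obtain ⟨y, hyJ, hyD⟩ := Set.exists_of_ssubset hDss
    obtain ⟨j, hjI, rfl⟩ := hyJ
    obtain ⟨i, hiI, rfl⟩ := hjI
    have hKss : Subtype.val '' (e.symm '' I') ⊂ C := by
      refine Set.ssubset_iff_subset_ne.mpr ⟨hKsub, fun hEq => ?_⟩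
      have hmem : (i : α) ∈ Subtype.val '' (e.symm '' I') := by
        rw [hEq, ← hIC]; exact ⟨i, hiI, rfl⟩
      obtain ⟨i', hi', heq⟩ := hmem
      obtain ⟨i'', hi'', rfl⟩ := hi'
      have h3 : e.symm i'' = i := Subtype.val_injective heq
      have h4 : i'' = e i := by rw [← h3, Equiv.apply_symm_apply]
      rw [h4] at hi''
      exact hyD (by rw [← hI'D]; exact ⟨e i, hi'', rfl⟩)
    have hind := hC.2.2 _ hKss
    have h5 := (he (e.symm '' I')).mp hind
    rwa [Equiv.image_symm_image, hI'D] at h5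
  · rw [Set.ncard_image_of_injective _ Subtype.val_injective,
      Set.ncard_image_of_injective _ e.injective, ← hIC,
      Set.ncard_image_of_injective _ Subtype.val_injective]

end Aux

section Aux2

open Set

private lemma K33_inc_apply (p : Fin 3 × Fin 3) (v : Fin 3 ⊕ Fin 3) :
    K33.inc p v = if v = Sum.inl p.1 ∨ v = Sum.inr p.2 then 1 else 0 := by
  simp only [Multigraph.inc, K33]
  have h1 : ¬ (Sym2.mk (Sum.inl p.1) (Sum.inr p.2) = Sym2.mk v v) := by
    rw [Sym2.eq_iff]
    rintro (⟨h1, h2⟩ | ⟨h1, h2⟩) <;> (rw [← h1] at h2; exact absurd h2 (by simp))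
  simp only [h1, if_false]
  simp [Sym2.mem_iff]

private lemma K33_circuit_facts {MK : Matroid (Fin 3 × Fin 3)} (hK : IsCycleMatroidOf K33 MK)
    {J : Set (Fin 3 × Fin 3)} (hJ : circuit MK J) : Even J.ncard ∧ J.ncard ≠ 2 := by
  have hfin : J.Finite := Set.toFinite J
  obtain ⟨hne, hsum⟩ := circuit_sum_zero hK hJ hfin
  have hcardF : J.ncard = hfin.toFinset.card := Set.ncard_eq_toFinset_card J hfin
  constructor
  · have h1 : ∀ p : Fin 3 × Fin 3,
        K33.inc p (Sum.inl 0) + K33.inc p (Sum.inl 1) + K33.inc p (Sum.inl 2) = 1 := by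
      intro p
      rw [K33_inc_apply, K33_inc_apply, K33_inc_apply]
      rcases p with ⟨i, j⟩
      fin_cases i <;> simp
    have h2 : ((hfin.toFinset.card : ℕ) : ZMod 2) = 0 := by
      calc ((hfin.toFinset.card : ℕ) : ZMod 2) = ∑ _p ∈ hfin.toFinset, (1 : ZMod 2) := by simp
        _ = ∑ p ∈ hfin.toFinset,
            (K33.inc p (Sum.inl 0) + K33.inc p (Sum.inl 1) + K33.inc p (Sum.inl 2)) :=
            Finset.sum_congr rfl (fun p _ => (h1 p).symm)
        _ = (∑ p ∈ hfin.toFinset, K33.inc p) (Sum.inl 0)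
            + (∑ p ∈ hfin.toFinset, K33.inc p) (Sum.inl 1)
            + (∑ p ∈ hfin.toFinset, K33.inc p) (Sum.inl 2) := by
            simp [Finset.sum_add_distrib, Finset.sum_apply]
        _ = 0 := by rw [hsum]; simp
    obtain ⟨k, hk⟩ := (ZMod.natCast_eq_zero_iff _ 2).mp h2
    exact ⟨k, by omega⟩
  · intro h2
    obtain ⟨p, q, hpq, hJeq⟩ := Set.ncard_eq_two.mp h2
    have hFeq : hfin.toFinset = {p, q} := by
      ext z
      rw [Set.Finite.mem_toFinset, hJeq]
      simp [Set.mem_insert_iff]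
    rw [hFeq, Finset.sum_pair hpq] at hsum
    have heq : K33.inc p = K33.inc q := by
      funext v
      have h3 := congrFun hsum v
      have h0 : ∀ x y : ZMod 2, x + y = 0 → x = y := by decide
      exact h0 _ _ (by simpa using h3)
    apply hpq
    rcases p with ⟨i, j⟩; rcases q with ⟨i', j'⟩
    have e1 := congrFun heq (Sum.inl i)
    have e2 := congrFun heq (Sum.inr j)
    rw [K33_inc_apply, K33_inc_apply] at e1
    rw [K33_inc_apply, K33_inc_apply] at e2
    have hi : i = i' := by
      by_contra hne'
      rw [if_pos (Or.inl rfl), if_neg (by simp [hne'])] at e1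
      exact one_ne_zero e1
    have hj : j = j' := by
      by_contra hne'
      rw [if_pos (Or.inr rfl), if_neg (by simp [hne'])] at e2
      exact one_ne_zero e2
    rw [hi, hj]

private lemma con_indep_iff_aux {N : Matroid α} {a : α} {I : Set α} :
    (con N {a}).Indep I ↔ I ⊆ N.E \ {a} ∧ ∃ B, N.dual.IsBasis B (N.E \ {a}) ∧ Disjoint I B := by
  show (Matroid.dual _).Indep I ↔ _
  rw [Matroid.dual_indep_iff_exists']
  refine and_congr Iff.rfl (exists_congr fun B => and_congr ?_ Iff.rfl)
  rw [show del N.dual {a} = N.dual.restrict (N.dual.E \ {a}) from rfl,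
    Matroid.isBase_restrict_iff Set.diff_subset, Matroid.dual_ground]

private lemma dual_base_between {N : Matroid α} {a : α} {B D : Set α}
    (hB : N.dual.IsBasis B (N.E \ {a})) (hD : N.dual.IsBase D) (hBD : B ⊆ D) : D ⊆ B ∪ {a} := by
  intro x hxD
  by_cases hxa : x = a
  · exact Or.inr (by simp [hxa])
  · left
    have hxR : x ∈ N.E \ {a} := ⟨hD.subset_ground hxD, hxa⟩
    have h1 := hB.eq_of_subset_indep (hD.indep.subset (Set.insert_subset hxD hBD))
      (Set.subset_insert _ _) (Set.insert_subset hxR hB.subset)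
    rw [h1]; exact Set.mem_insert _ _

private lemma con_indep_of_indep_singleton {N : Matroid α} {a : α} (hfinE : N.E.Finite)
    (ha : N.Indep {a}) {I : Set α} (hI : I ⊆ N.E \ {a}) :
    (con N {a}).Indep I ↔ N.Indep (I ∪ {a}) := by
  rw [con_indep_iff_aux]
  constructor
  · rintro ⟨hIR, B, hB, hIB⟩
    obtain ⟨D, hD, hBD⟩ := hB.indep.exists_isBase_superset
    have hDBa : D ⊆ B ∪ {a} := dual_base_between hB hD hBD
    by_cases haD : a ∈ D
    · exfalso
      have hDeq : D = B ∪ {a} :=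
        Set.Subset.antisymm hDBa (Set.union_subset hBD (by simpa using haD))
      obtain ⟨B₃, hB₃, haB₃⟩ := ha.exists_isBase_superset
      have hmemB₃ : a ∈ B₃ := haB₃ rfl
      have hbasis : N.IsBasis (B₃ ∩ {a}) {a} := by
        rw [Set.inter_eq_self_of_subset_right haB₃]
        exact ha.isBasis_self
      have h2 := hB₃.compl_inter_isBasis_of_inter_isBasis hbasis
      have h3 : (N.E \ B₃) ∩ (N.E \ {a}) = N.E \ B₃ :=
        Set.inter_eq_self_of_subset_left
          (fun x hx => ⟨hx.1, fun h => hx.2 (by rw [Set.mem_singleton_iff.mp h]; exact hmemB₃)⟩)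
      rw [h3] at h2
      have hc1 : B.encard = (N.E \ B₃).encard := hB.encard_eq_encard h2
      have h4 : N.dual.IsBase (N.E \ B₃) := hB₃.compl_isBase_dual
      have hc2 : D.encard = (N.E \ B₃).encard := hD.encard_eq_encard_of_isBase h4
      have haB : a ∉ B := fun h => (hB.subset h).2 rfl
      have hc3 : D.encard = B.encard + 1 := by
        rw [hDeq, Set.union_singleton, Set.encard_insert_of_notMem haB]
      have hBfin : B.Finite := hfinE.subset (hB.subset.trans Set.diff_subset)
      have h5 : B.encard + 1 = B.encard := by rw [← hc3, hc2, ← hc1]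
      rw [hBfin.encard_eq_coe_toFinset_card] at h5
      have h6 : (hBfin.toFinset.card + 1 : ℕ) = hBfin.toFinset.card := by exact_mod_cast h5
      omega
    · have hDeq : D = B := Set.Subset.antisymm
        (fun x hx => (hDBa hx).resolve_right
          (fun h => haD (by rwa [Set.mem_singleton_iff.mp h] at hx)))
        hBD
      have hBbase : N.dual.IsBase B := hDeq ▸ hD
      have hcompl : N.IsBase (N.E \ B) := hBbase.compl_isBase_of_dual
      refine hcompl.indep.subset (Set.union_subset ?_ ?_)
      · exact fun x hx => ⟨(hI hx).1, fun hxB => (Set.disjoint_left.mp hIB hx) hxB⟩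
      · intro x hx
        rw [Set.mem_singleton_iff.mp hx]
        exact ⟨ha.subset_ground rfl, fun haB => (hB.subset haB).2 rfl⟩
  · intro hIa
    obtain ⟨B₃, hB₃, hsub⟩ := hIa.exists_isBase_superset
    have haB₃ : a ∈ B₃ := hsub (Set.mem_union_right _ rfl)
    have hbasis : N.IsBasis (B₃ ∩ {a}) {a} := by
      rw [Set.inter_eq_self_of_subset_right (by simpa using haB₃)]
      exact ha.isBasis_self
    have h2 := hB₃.compl_inter_isBasis_of_inter_isBasis hbasis
    refine ⟨hI, _, h2, Set.disjoint_left.mpr fun x hxI hx => ?_⟩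
    exact hx.1.2 (hsub (Set.mem_union_left _ hxI))

private lemma con_indep_of_loop {N : Matroid α} {a : α} (haE : a ∈ N.E) (ha : ¬ N.Indep {a})
    {I : Set α} (hI : I ⊆ N.E \ {a}) : (con N {a}).Indep I ↔ N.Indep I := by
  rw [con_indep_iff_aux]
  constructor
  · rintro ⟨hIR, B, hB, hIB⟩
    obtain ⟨D, hD, hBD⟩ := hB.indep.exists_isBase_superset
    have hDBa : D ⊆ B ∪ {a} := dual_base_between hB hD hBD
    have hcompl : N.IsBase (N.E \ D) := hD.compl_isBase_of_dual
    refine hcompl.indep.subset fun x hx => ⟨(hI hx).1, fun hxD => ?_⟩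
    rcases hDBa hxD with hxB | hxa
    · exact Set.disjoint_left.mp hIB hx hxB
    · exact (hI hx).2 hxa
  · intro hNI
    obtain ⟨B₅, hB₅, hsub⟩ := hNI.exists_isBase_superset
    have haB₅ : a ∉ B₅ := fun h => ha (hB₅.indep.subset (by simpa using h))
    have hbasis : N.IsBasis (B₅ ∩ {a}) {a} := by
      have hempty : B₅ ∩ {a} = ∅ := by
        ext x
        simp only [Set.mem_inter_iff, Set.mem_singleton_iff, Set.mem_empty_iff_false, iff_false,
          not_and]
        rintro hx rfl; exact haB₅ hx
      rw [hempty, Matroid.isBasis_iff (show {a} ⊆ N.E by simpa using haE)]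
      refine ⟨N.empty_indep, Set.empty_subset _, fun J hJ _ hJa => ?_⟩
      rcases Set.subset_singleton_iff_eq.mp hJa with rfl | rfl
      · rfl
      · exact absurd hJ ha
    have h2 := hB₅.compl_inter_isBasis_of_inter_isBasis hbasis
    exact ⟨hI, _, h2, Set.disjoint_left.mpr fun x hxI hx => hx.1.2 (hsub hxI)⟩

end Aux2

section Aux3

open Set

private lemma con_circuit {N : Matroid α} {a : α} (haE : a ∈ N.E) (hfinE : N.E.Finite)
    {C : Set α} (hC : circuit (con N {a}) C) :
    circuit N C ∨ (N.Indep {a} ∧ circuit N (C ∪ {a})) := by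
  have hCR : C ⊆ N.E \ {a} := hC.1
  have haC : a ∉ C := fun h => (hCR h).2 rfl
  by_cases haI : N.Indep {a}
  · by_cases hNC : N.Indep C
    · right
      refine ⟨haI, Set.union_subset (hCR.trans Set.diff_subset) (by simpa using haE), ?_, ?_⟩
      · intro hind
        exact hC.2.1 ((con_indep_of_indep_singleton hfinE haI hCR).mpr hind)
      · intro D hDss
        by_cases haD : a ∈ D
        · have hD'c : D \ {a} ⊂ C := by
            constructor
            · intro x hx
              rcases (Set.mem_union _ _ _).mp (hDss.subset hx.1) with h | h
              · exact h
              · exact absurd h hx.2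
            · intro hsub
              apply hDss.ne
              apply Set.Subset.antisymm hDss.subset
              exact Set.union_subset (hsub.trans Set.diff_subset) (by simpa using haD)
          have hind := hC.2.2 _ hD'c
          have h1 := (con_indep_of_indep_singleton hfinE haI (hD'c.subset.trans hCR)).mp hind
          rwa [Set.diff_union_self, Set.union_eq_self_of_subset_right (by simpa using haD)] at h1
        · have hDC : D ⊆ C := fun x hx =>
            ((Set.mem_union _ _ _).mp (hDss.subset hx)).resolve_right
              (fun h => haD (by rwa [Set.mem_singleton_iff.mp h] at hx))
          exact hNC.subset hDC
    · left
      refine ⟨hCR.trans Set.diff_subset, hNC, fun D hDss => ?_⟩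
      have hind := hC.2.2 _ hDss
      have h1 := (con_indep_of_indep_singleton hfinE haI (hDss.subset.trans hCR)).mp hind
      exact h1.subset Set.subset_union_left
  · left
    refine ⟨hCR.trans Set.diff_subset, ?_, fun D hDss => ?_⟩
    · exact fun h => hC.2.1 ((con_indep_of_loop haE haI hCR).mpr h)
    · exact (con_indep_of_loop haE haI (hDss.subset.trans hCR)).mp (hC.2.2 _ hDss)

private lemma sum_symmDiff_eq {η : Type} (f : α → η → ZMod 2) (s t : Finset α) :
    ∑ x ∈ (s \ t) ∪ (t \ s), f x = ∑ x ∈ s, f x + ∑ x ∈ t, f x := by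
  have hzero : ∑ x ∈ s ∩ t, f x + ∑ x ∈ s ∩ t, f x = 0 := by
    funext v
    have h0 : ∀ y : ZMod 2, y + y = 0 := by decide
    exact h0 _
  have h1 : ((s \ t) ∪ (t \ s)) ∪ (s ∩ t) = s ∪ t := by
    ext x
    simp only [Finset.mem_union, Finset.mem_sdiff, Finset.mem_inter]
    tauto
  have hdisj : Disjoint ((s \ t) ∪ (t \ s)) (s ∩ t) := by
    rw [Finset.disjoint_left]
    intro x hx hx'
    rw [Finset.mem_inter] at hx'
    rcases Finset.mem_union.mp hx with h | h
    · exact (Finset.mem_sdiff.mp h).2 hx'.2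
    · exact (Finset.mem_sdiff.mp h).2 hx'.1
  rw [← Finset.sum_union_inter, ← h1, Finset.sum_union hdisj, add_assoc, hzero, add_zero]

private lemma even_ncard_of_sum_zero {η : Type} {A : α → η → ZMod 2} {N : Matroid α}
    (hrep : RepresentsOn A N.E N) {a : α}
    (hcirc : ∀ C, circuit N C → C ⊆ N.E \ {a} → Even C.ncard) :
    ∀ (n : ℕ) (S : Set α), S ⊆ N.E \ {a} → ∀ (hfin : S.Finite), S.ncard ≤ n →
      ∑ x ∈ hfin.toFinset, A x = 0 → Even S.ncard := by
  intro n
  induction n with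
  | zero =>
    intro S hS hfin hle _
    simp [Nat.le_zero.mp hle]
  | succ n ih =>
    intro S hS hfin hle hsum
    rcases S.eq_empty_or_nonempty with rfl | hne
    · simp
    have hSE : S ⊆ N.E := hS.trans Set.diff_subset
    have hdep : ¬ N.Indep S := not_indep_of_sum_zero hrep hSE hfin hne hsum
    obtain ⟨C, hCS, hC⟩ := exists_circuit_subset N hfin hSE hdep
    have hCfin : C.Finite := hfin.subset hCS
    obtain ⟨hCne, hCsum⟩ := circuit_sum_zero hrep hC hCfin
    have hCeven : Even C.ncard := hcirc C hC (hCS.trans hS)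
    have hS'fin : (S \ C).Finite := hfin.subset Set.diff_subset
    have hsum' : ∑ x ∈ hS'fin.toFinset, A x = 0 := by
      have hFsub : hCfin.toFinset ⊆ hfin.toFinset := by
        intro x hx
        rw [Set.Finite.mem_toFinset] at hx ⊢
        exact hCS hx
      have hFdiff : hS'fin.toFinset = hfin.toFinset \ hCfin.toFinset := by
        ext x; simp [Set.Finite.mem_toFinset]
      have h2 := Finset.sum_sdiff (f := A) hFsub
      rw [hCsum, add_zero] at h2
      rw [hFdiff]
      exact h2.trans hsum
    have hCpos : 0 < C.ncard := (Set.ncard_pos hCfin).mpr hCne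
    have hsplit : (S \ C).ncard + C.ncard = S.ncard :=
      Set.ncard_diff_add_ncard_of_subset hCS hfin
    have hle' : (S \ C).ncard ≤ n := by omega
    have hS'even := ih (S \ C) (Set.diff_subset.trans hS) hS'fin hle' hsum'
    have hfinal : S.ncard = (S \ C).ncard + C.ncard := hsplit.symm
    rw [hfinal]
    exact hS'even.add hCeven

end Aux3

/-- If `N` is binary and `N \ a ≅ M(K₃,₃)`, then no element of `N/a`
lies simultaneously in a 2-element circuit and in an odd circuit of `N/a`. -/
theorem contract_K33_no_two_and_odd {α : Type} (N : Matroid α) (a : α)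
    (MK : Matroid (Fin 3 × Fin 3))
    (hbin : IsBinary N) (ha : a ∈ N.E)
    (hK : IsCycleMatroidOf K33 MK) (hiso : MIso (del N {a}) MK) :
    ¬ ∃ (x : α) (C₂ Co : Set α), circuit (con N {a}) C₂ ∧ circuit (con N {a}) Co ∧
      x ∈ C₂ ∧ x ∈ Co ∧ C₂.ncard = 2 ∧ Odd Co.ncard := by
  rintro ⟨x, C₂, Co, h2, ho, -, -, hcard2, hcardo⟩
  obtain ⟨η, A, hrep⟩ := hbin
  -- the ground set of `N` is finite
  have hfinE : N.E.Finite := by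
    obtain ⟨e, -⟩ := hiso
    haveI : Finite (MK.E : Set (Fin 3 × Fin 3)) := (Set.toFinite MK.E)
    have h1 : (del N {a}).E.Finite := Set.finite_coe_iff.mp (Finite.of_equiv _ e.symm)
    have h2' : N.E ⊆ (del N {a}).E ∪ {a} := by
      intro y hy
      by_cases hya : y = a
      · exact Set.mem_union_right _ (by simp [hya])
      · exact Set.mem_union_left _ ⟨hy, hya⟩
    exact ((h1.union (Set.finite_singleton a)).subset h2')
  -- circuits of `del N {a}` are even and not of size 2
  have hMK : ∀ C : Set α, circuit (del N {a}) C → Even C.ncard ∧ C.ncard ≠ 2 := by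
    intro C hCd
    obtain ⟨J, hJ, hJcard⟩ := circuit_image hiso hCd
    have h1 := K33_circuit_facts hK hJ
    rwa [hJcard] at h1
  -- circuits of `N` avoiding `a` are even and not of size 2
  have hNcirc : ∀ C, circuit N C → C ⊆ N.E \ {a} → Even C.ncard ∧ C.ncard ≠ 2 := by
    intro C hC hCR
    apply hMK
    refine ⟨hCR, ?_, ?_⟩
    · intro hind
      rw [show del N {a} = N.restrict (N.E \ {a}) from rfl, Matroid.restrict_indep_iff] at hind
      exact hC.2.1 hind.1
    · intro D hDss
      rw [show del N {a} = N.restrict (N.E \ {a}) from rfl, Matroid.restrict_indep_iff]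
      exact ⟨hC.2.2 D hDss, hDss.subset.trans hCR⟩
  have h2R : C₂ ⊆ N.E \ {a} := h2.1
  have hoR : Co ⊆ N.E \ {a} := ho.1
  have ha2 : a ∉ C₂ := fun h => (h2R h).2 rfl
  have hao : a ∉ Co := fun h => (hoR h).2 rfl
  -- both `C₂ ∪ {a}` and `Co ∪ {a}` are circuits of `N`
  have hC2' : circuit N (C₂ ∪ {a}) := by
    rcases con_circuit ha hfinE h2 with h | ⟨-, h⟩
    · exact absurd hcard2 (hNcirc _ h h2R).2
    · exact h
  have hCo' : circuit N (Co ∪ {a}) := by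
    rcases con_circuit ha hfinE ho with h | ⟨-, h⟩
    · obtain ⟨m, hm⟩ := (hNcirc _ h hoR).1
      obtain ⟨k, hk⟩ := hcardo
      omega
    · exact h
  -- their sums of columns vanish
  have hfin2 : (C₂ ∪ {a}).Finite := hfinE.subset hC2'.1
  have hfino : (Co ∪ {a}).Finite := hfinE.subset hCo'.1
  have hs2 := (circuit_sum_zero hrep hC2' hfin2).2
  have hso := (circuit_sum_zero hrep hCo' hfino).2
  have hsym := sum_symmDiff_eq A hfin2.toFinset hfino.toFinset
  rw [hs2, hso, add_zero] at hsym
  -- the symmetric difference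
  have hfinC2 : C₂.Finite := hfinE.subset (h2R.trans Set.diff_subset)
  have hfinCo : Co.Finite := hfinE.subset (hoR.trans Set.diff_subset)
  have hDfin : ((C₂ \ Co) ∪ (Co \ C₂)).Finite := (hfinC2.diff (t := Co)).union (hfinCo.diff (t := C₂))
  have hDF : hDfin.toFinset = (hfin2.toFinset \ hfino.toFinset) ∪
      (hfino.toFinset \ hfin2.toFinset) := by
    ext y
    simp only [Set.Finite.mem_toFinset, Finset.mem_union, Finset.mem_sdiff,
      Set.Finite.mem_toFinset, Set.mem_union, Set.mem_diff, Set.mem_singleton_iff]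
    constructor
    · rintro (⟨h1, hh2⟩ | ⟨h1, hh2⟩)
      · exact Or.inl ⟨Or.inl h1, by rintro (h | rfl); exacts [hh2 h, ha2 h1]⟩
      · exact Or.inr ⟨Or.inl h1, by rintro (h | rfl); exacts [hh2 h, hao h1]⟩
    · rintro (⟨h1 | h1, hh2⟩ | ⟨h1 | h1, hh2⟩)
      · exact Or.inl ⟨h1, fun h => hh2 (Or.inl h)⟩
      · exact absurd (Or.inr h1) hh2
      · exact Or.inr ⟨h1, fun h => hh2 (Or.inl h)⟩
      · exact absurd (Or.inr h1) hh2
  rw [← hDF] at hsym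
  have hDsub : (C₂ \ Co) ∪ (Co \ C₂) ⊆ N.E \ {a} := by
    intro y hy
    rcases (Set.mem_union _ _ _).mp hy with h | h
    · exact h2R h.1
    · exact hoR h.1
  have hDeven : Even ((C₂ \ Co) ∪ (Co \ C₂)).ncard :=
    even_ncard_of_sum_zero hrep (fun C hC hCR => (hNcirc C hC hCR).1)
      ((C₂ \ Co) ∪ (Co \ C₂)).ncard _ hDsub hDfin le_rfl hsym
  -- cardinality bookkeeping
  have hd : ((C₂ \ Co) ∪ (Co \ C₂)).ncard = (C₂ \ Co).ncard + (Co \ C₂).ncard :=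
    Set.ncard_union_eq disjoint_sdiff_sdiff (hfinC2.diff (t := Co)) (hfinCo.diff (t := C₂))
  have h2split : (C₂ ∩ Co).ncard + (C₂ \ Co).ncard = C₂.ncard :=
    Set.ncard_inter_add_ncard_diff_eq_ncard C₂ Co hfinC2
  have hosplit : (Co ∩ C₂).ncard + (Co \ C₂).ncard = Co.ncard :=
    Set.ncard_inter_add_ncard_diff_eq_ncard Co C₂ hfinCo
  have hinter : (C₂ ∩ Co).ncard = (Co ∩ C₂).ncard := by rw [Set.inter_comm]
  obtain ⟨u, hu⟩ := hDeven
  obtain ⟨v, hv⟩ := hcardo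
  omega

end PaperSplit
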